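/- In the over-parameterized setting, the variance averaged over the empirical distribution of training inputs equals (r/m)σ², where r = rank(X): (1/m)Σᵢ Var(h(xᵢ)) = σ² r / m. In particular the variance scales with the rank of the data, not the number of parameters N. -/

import Mathlib

open MeasureTheory ProbabilityTheory Matrix
open scoped NNReal

lemma aux_key {m n : ℕ} (X : Matrix (Fin m) (Fin n) ℝ) (B : Matrix (Fin n) (Fin n) ℝ)
    (h1 : (Xᵀ * X) * B * (Xᵀ * X) = Xᵀ * X) : X * B * (Xᵀ * X) = X := by
  set A := X * B * (Xᵀ * X) - X with hAdef
  have hXA : Xᵀ * A = 0 := by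
    rw [hAdef, Matrix.mul_sub,
      show Xᵀ * (X * B * (Xᵀ * X)) = (Xᵀ * X) * B * (Xᵀ * X) by
        simp [Matrix.mul_assoc], h1, sub_self]
  have hA : Aᵀ * A = 0 := by
    have hT : Aᵀ = (Xᵀ * X) * Bᵀ * Xᵀ - Xᵀ := by
      rw [hAdef]; simp [Matrix.transpose_sub, Matrix.transpose_mul, Matrix.mul_assoc]
    rw [hT, Matrix.sub_mul,
      show (Xᵀ * X) * Bᵀ * Xᵀ * A = (Xᵀ * X) * Bᵀ * (Xᵀ * A) by simp [Matrix.mul_assoc],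
      hXA]
    simp
  have hA0 : A = 0 := by
    have := Matrix.conjTranspose_mul_self_eq_zero (A := A)
    rw [Matrix.conjTranspose_eq_transpose_of_trivial] at this
    exact this.mp hA
  exact sub_eq_zero.mp hA0

lemma aux_trace_eq_rank {n : ℕ} (M : Matrix (Fin n) (Fin n) ℝ) (h : M * M = M) :
    M.trace = (M.rank : ℝ) := by
  have hproj : LinearMap.IsProj (LinearMap.range M.mulVecLin) M.mulVecLin := by
    constructor
    · intro x; exact LinearMap.mem_range_self _ x
    · rintro x ⟨y, rfl⟩
      show (M.mulVecLin) (M.mulVecLin y) = _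
      simp [Matrix.mulVecLin_apply, Matrix.mulVec_mulVec, h]
  have htr := hproj.trace
  have h2 : LinearMap.trace ℝ (Fin n → ℝ) M.mulVecLin = M.trace := by
    rw [LinearMap.trace_eq_matrix_trace ℝ (Pi.basisFun ℝ (Fin n))]
    congr 1
    rw [LinearMap.toMatrix_eq_toMatrix', ← Matrix.toLin'_apply', LinearMap.toMatrix'_toLin']
  rw [Matrix.rank, ← htr, h2]

theorem stmt5 {Ω : Type*} [MeasurableSpace Ω] (μ : Measure Ω) [IsProbabilityMeasure μ]
    {m N : ℕ} (hN : 0 < N) (hmN : m < N) (X : Matrix (Fin m) (Fin N) ℝ)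
    (Splus : Matrix (Fin N) (Fin N) ℝ)
    (hS1 : (Xᵀ * X) * Splus * (Xᵀ * X) = Xᵀ * X)
    (hS2 : Splus * (Xᵀ * X) * Splus = Splus)
    (hS3 : ((Xᵀ * X) * Splus).IsSymm)
    (hS4 : (Splus * (Xᵀ * X)).IsSymm)
    (P : Matrix (Fin N) (Fin N) ℝ)
    (hPsymm : P.IsSymm) (hPidem : P * P = P)
    (hXP : X * P = 0) (hPnull : ∀ v, X *ᵥ v = 0 → P *ᵥ v = v)
    (θstar : Fin N → ℝ) (ε : Ω → Fin m → ℝ) (σ : ℝ)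
    (hεmeas : Measurable ε)
    (hεL2 : ∀ i, MemLp (fun ω => ε ω i) 2 μ)
    (hεmean : ∀ i, ∫ ω, ε ω i ∂μ = 0)
    (hεcov : ∀ i j, ∫ ω, ε ω i * ε ω j ∂μ = if i = j then σ ^ 2 else 0)
    (θ₀ : Ω → Fin N → ℝ) (hθmeas : Measurable θ₀)
    (hgauss : ∀ i, μ.map (fun ω => θ₀ ω i) = gaussianReal 0 ((N : ℝ≥0))⁻¹)
    (hiid : iIndepFun (fun i ω => θ₀ ω i) μ)
    (hindep : IndepFun θ₀ ε μ) :
    (∑ i : Fin m,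
        variance (fun ω =>
          (X i) ⬝ᵥ (P *ᵥ θ₀ ω + (Splus * Xᵀ) *ᵥ (X *ᵥ θstar + ε ω))) μ) / m
      = σ ^ 2 * X.rank / m := by
  set M : Matrix (Fin m) (Fin m) ℝ := X * Splus * Xᵀ with hMdef
  have key1 : X * Splus * (Xᵀ * X) = X := aux_key X Splus hS1
  -- M * Mᵀ = Mᵀ
  have hMMT : M * Mᵀ = Mᵀ := by
    rw [hMdef]
    calc (X * Splus * Xᵀ) * (X * Splus * Xᵀ)ᵀ
        = (X * Splus * (Xᵀ * X)) * (Splusᵀ * Xᵀ) := by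
          simp [Matrix.transpose_mul, Matrix.mul_assoc]
      _ = (X * Splus * Xᵀ)ᵀ := by rw [key1]; simp [Matrix.transpose_mul, Matrix.mul_assoc]
  have hMsymm : Mᵀ = M := by
    have hsym : (M * Mᵀ)ᵀ = M * Mᵀ := by
      rw [Matrix.transpose_mul, Matrix.transpose_transpose]
    calc Mᵀ = M * Mᵀ := hMMT.symm
      _ = (M * Mᵀ)ᵀ := hsym.symm
      _ = Mᵀᵀ := by rw [hMMT]
      _ = M := Matrix.transpose_transpose M
  have hMidem : M * M = M := by
    have h := hMMT
    rw [hMsymm] at h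
    exact h
  have hMX : M * X = X := by
    rw [hMdef, Matrix.mul_assoc (X * Splus) Xᵀ X, key1]
  have hrank : M.rank = X.rank := by
    refine le_antisymm ?_ ?_
    · calc M.rank ≤ Xᵀ.rank := Matrix.rank_mul_le_right (X * Splus) Xᵀ
        _ = X.rank := Matrix.rank_transpose X
    · calc X.rank = (M * X).rank := by rw [hMX]
        _ ≤ M.rank := Matrix.rank_mul_le_left M X
  -- rewrite each random variable
  have hfun : ∀ i : Fin m, (fun ω =>
      (X i) ⬝ᵥ (P *ᵥ θ₀ ω + (Splus * Xᵀ) *ᵥ (X *ᵥ θstar + ε ω)))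
      = fun ω => (M *ᵥ (X *ᵥ θstar)) i + ∑ j, M i j * ε ω j := by
    intro i
    funext ω
    have h0 : X *ᵥ (P *ᵥ θ₀ ω) = 0 := by
      rw [Matrix.mulVec_mulVec, hXP, Matrix.zero_mulVec]
    have h1 : X *ᵥ ((Splus * Xᵀ) *ᵥ (X *ᵥ θstar + ε ω))
        = M *ᵥ (X *ᵥ θstar) + M *ᵥ ε ω := by
      rw [Matrix.mulVec_mulVec, ← Matrix.mul_assoc, ← hMdef, Matrix.mulVec_add]
    calc (X i) ⬝ᵥ (P *ᵥ θ₀ ω + (Splus * Xᵀ) *ᵥ (X *ᵥ θstar + ε ω))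
        = (X *ᵥ (P *ᵥ θ₀ ω)) i + (X *ᵥ ((Splus * Xᵀ) *ᵥ (X *ᵥ θstar + ε ω))) i := by
          rw [dotProduct_add]; rfl
      _ = (M *ᵥ (X *ᵥ θstar)) i + ∑ j, M i j * ε ω j := by
          rw [h0, h1]
          simp only [Pi.zero_apply, Pi.add_apply, zero_add]
          rfl
  -- variance of each
  have intε : ∀ j, Integrable (fun ω => ε ω j) μ := fun j =>
    (hεL2 j).integrable (by norm_num)
  have intprod : ∀ j k, Integrable (fun ω => ε ω j * ε ω k) μ := by
    intro j k
    have h1 := ((hεL2 j).add (hεL2 k)).integrable_sq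
    have h2 := (hεL2 j).integrable_sq
    have h3 := (hεL2 k).integrable_sq
    have heq : (fun ω => ε ω j * ε ω k)
        = fun ω => (((ε ω j + ε ω k) ^ 2 - ε ω j ^ 2) - ε ω k ^ 2) / 2 := by
      funext ω; ring
    rw [heq]
    exact ((h1.sub h2).sub h3).div_const 2
  have hvar : ∀ i : Fin m, variance (fun ω =>
      (M *ᵥ (X *ᵥ θstar)) i + ∑ j, M i j * ε ω j) μ = σ ^ 2 * ∑ j, (M i j) ^ 2 := by
    intro i
    set C : ℝ := (M *ᵥ (X *ᵥ θstar)) i with hC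
    have hL2sum : MemLp (fun ω => ∑ j, M i j * ε ω j) 2 μ := by
      exact memLp_finset_sum Finset.univ (fun j _ => (hεL2 j).const_mul (M i j))
    have hL2 : MemLp (fun ω => C + ∑ j, M i j * ε ω j) 2 μ :=
      (memLp_const C).add hL2sum
    have intsum : Integrable (fun ω => ∑ j, M i j * ε ω j) μ := by
      apply integrable_finset_sum
      intro j _
      exact (intε j).const_mul (M i j)
    have hmean : ∫ ω, (C + ∑ j, M i j * ε ω j) ∂μ = C := by
      rw [integral_add (integrable_const C) intsum, integral_const, probReal_univ,
        one_smul, integral_finset_sum _ (fun j _ => (intε j).const_mul (M i j))]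
      simp [integral_const_mul, hεmean]
    have hsq : ∫ ω, (C + ∑ j, M i j * ε ω j) ^ 2 ∂μ
        = C ^ 2 + σ ^ 2 * ∑ j, (M i j) ^ 2 := by
      have hexp : ∀ ω, (C + ∑ j, M i j * ε ω j) ^ 2
          = (C ^ 2 + (2 * C) * ∑ j, M i j * ε ω j)
            + ∑ j, ∑ k, (M i j * M i k) * (ε ω j * ε ω k) := by
        intro ω
        have hg : (∑ j, M i j * ε ω j) * (∑ k, M i k * ε ω k)
            = ∑ j, ∑ k, (M i j * M i k) * (ε ω j * ε ω k) := by
          rw [Finset.sum_mul_sum]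
          exact Finset.sum_congr rfl fun j _ => Finset.sum_congr rfl fun k _ => by ring
        calc (C + ∑ j, M i j * ε ω j) ^ 2
            = (C ^ 2 + (2 * C) * ∑ j, M i j * ε ω j)
              + (∑ j, M i j * ε ω j) * (∑ k, M i k * ε ω k) := by ring
          _ = (C ^ 2 + (2 * C) * ∑ j, M i j * ε ω j)
              + ∑ j, ∑ k, (M i j * M i k) * (ε ω j * ε ω k) := by rw [hg]
      simp_rw [hexp]
      have int1 : Integrable (fun ω => C ^ 2 + (2 * C) * ∑ j, M i j * ε ω j) μ :=
        (integrable_const _).add (intsum.const_mul _)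
      have int2 : Integrable (fun ω => ∑ j, ∑ k, (M i j * M i k) * (ε ω j * ε ω k)) μ := by
        apply integrable_finset_sum
        intro j _
        apply integrable_finset_sum
        intro k _
        exact (intprod j k).const_mul _
      rw [integral_add int1 int2, integral_add (integrable_const _) (intsum.const_mul _),
        integral_const, probReal_univ, one_smul, integral_const_mul,
        integral_finset_sum _ (fun j _ => (intε j).const_mul (M i j))]
      simp_rw [integral_const_mul, hεmean, mul_zero, Finset.sum_const_zero]
      rw [integral_finset_sum _ (fun j _ => by
        exact integrable_finset_sum _ (fun k _ => (intprod j k).const_mul _))]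
      simp_rw [integral_finset_sum _ (fun k (_ : k ∈ Finset.univ) => (intprod _ k).const_mul _),
        integral_const_mul, hεcov]
      simp [Finset.mul_sum, Finset.sum_ite_eq', sq]
      exact Finset.sum_congr rfl fun j _ => by ring
    rw [variance_eq_sub hL2]
    have : (fun ω => C + ∑ j, M i j * ε ω j) ^ 2
        = fun ω => (C + ∑ j, M i j * ε ω j) ^ 2 := rfl
    rw [this, hsq, hmean]
    ring
  -- put it together
  have hsum : ∑ i, ∑ j, (M i j) ^ 2 = (X.rank : ℝ) := by
    have h1 : ∑ i, ∑ j, (M i j) ^ 2 = (M * Mᵀ).trace := by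
      simp [Matrix.trace, Matrix.mul_apply, Matrix.diag, sq, Matrix.transpose_apply]
    rw [h1, hMMT, ← hrank, ← aux_trace_eq_rank M hMidem, ← hMsymm, Matrix.trace_transpose]
  simp_rw [hfun, hvar]
  rw [← Finset.mul_sum, hsum]
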